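/- Define J_rot(ℰ) := (1/(√2·π)) ∫_{φ=−π}^{π} √(cos φ + ℰ) dφ for ℰ > 1, and J_lib(ℰ) := (√2/π) ∫_{φ=−arccos(−ℰ)}^{arccos(−ℰ)} √(cos φ + ℰ) dφ for −1 < ℰ < 1. Then both functions satisfy the same second-order linear differential equation J''(ℰ) = J(ℰ)/(4·(1−ℰ²)) on their respective domains: for every ℰ > 1 the second derivative of J_rot at ℰ equals J_rot(ℰ)/(4(1−ℰ²)), and for every ℰ ∈ (−1,1) the second derivative of J_lib at ℰ equals J_lib(ℰ)/(4(1−ℰ²)). -/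

import Mathlib

open MeasureTheory Real

/-- The Whitham modulation quantity for superluminal rotational wavetrains,
`J_rot(ℰ) = (1/(√2 π)) ∫_{−π}^{π} √(cos φ + ℰ) dφ`, for `ℰ > 1`. -/
noncomputable def J_rot (E : ℝ) : ℝ :=
  (1 / (Real.sqrt 2 * Real.pi)) * ∫ φ in (-Real.pi)..Real.pi, Real.sqrt (Real.cos φ + E)

/-- The Whitham modulation quantity for superluminal librational wavetrains,
`J_lib(ℰ) = (√2/π) ∫_{−arccos(−ℰ)}^{arccos(−ℰ)} √(cos φ + ℰ) dφ`, for `−1 < ℰ < 1`. -/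
noncomputable def J_lib (E : ℝ) : ℝ :=
  (Real.sqrt 2 / Real.pi) *
    ∫ φ in (-(Real.arccos (-E)))..(Real.arccos (-E)), Real.sqrt (Real.cos φ + E)

open Set Metric


lemma hasDerivAt_param_integral {F F' : ℝ → ℝ → ℝ} {a b E₀ ε : ℝ} (hab : a ≤ b) (hε : 0 < ε)
    (hFc : ∀ E ∈ closedBall E₀ ε, ContinuousOn (F E) (Icc a b))
    (hF'c : ContinuousOn (fun p : ℝ × ℝ => F' p.1 p.2) (closedBall E₀ ε ×ˢ Icc a b))
    (hd : ∀ E ∈ closedBall E₀ ε, ∀ φ ∈ Icc a b, HasDerivAt (fun E => F E φ) (F' E φ) E) :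
    HasDerivAt (fun E => ∫ φ in a..b, F E φ) (∫ φ in a..b, F' E₀ φ) E₀ := by
  obtain ⟨C, hC⟩ :=
    ((isCompact_closedBall E₀ ε).prod isCompact_Icc).exists_bound_of_continuousOn hF'c
  have hE₀mem : E₀ ∈ closedBall E₀ ε := mem_closedBall_self hε.le
  have hsub : uIoc a b ⊆ Icc a b := by
    rw [uIoc_of_le hab]; exact Ioc_subset_Icc_self
  have key := intervalIntegral.hasDerivAt_integral_of_dominated_loc_of_deriv_le
      (F := F) (F' := F') (x₀ := E₀) (μ := volume) (a := a) (b := b)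
      (bound := fun _ => C) (ball_mem_nhds E₀ hε)
      (Filter.eventually_of_mem (closedBall_mem_nhds E₀ hε) (fun E hE =>
        ((hFc E hE).mono hsub).aestronglyMeasurable measurableSet_uIoc))
      (by
        apply ContinuousOn.intervalIntegrable
        rw [uIcc_of_le hab]; exact hFc E₀ hE₀mem)
      (((hF'c.comp (Continuous.continuousOn (by continuity : Continuous fun φ : ℝ => (E₀, φ)))
          (fun φ hφ => ⟨hE₀mem, hφ⟩)).mono hsub).aestronglyMeasurable measurableSet_uIoc)
      (Filter.Eventually.of_forall fun φ hφ E hE =>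
        hC (E, φ) ⟨ball_subset_closedBall hE, hsub hφ⟩)
      intervalIntegrable_const
      (Filter.Eventually.of_forall fun φ hφ E hE =>
        hd E (ball_subset_closedBall hE) φ (hsub hφ))
  exact key.2


lemma rot_pos {E φ : ℝ} (hE : 1 < E) : 0 < Real.cos φ + E := by
  nlinarith [Real.neg_one_le_cos φ]

lemma hasDerivAt_G0 {E φ : ℝ} (h : 0 < Real.cos φ + E) :
    HasDerivAt (fun E => Real.sqrt (Real.cos φ + E))
      (1 / (2 * Real.sqrt (Real.cos φ + E))) E := by
  have h1 : HasDerivAt (fun E : ℝ => Real.cos φ + E) 1 E := (hasDerivAt_id E).const_add _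
  have := (Real.hasDerivAt_sqrt h.ne').comp E h1
  simpa [Function.comp_def] using this

lemma hasDerivAt_G1 {E φ : ℝ} (h : 0 < Real.cos φ + E) :
    HasDerivAt (fun E => 1 / (2 * Real.sqrt (Real.cos φ + E)))
      (-(1 / (4 * ((Real.cos φ + E) * Real.sqrt (Real.cos φ + E))))) E := by
  have hs : (0:ℝ) < Real.sqrt (Real.cos φ + E) := Real.sqrt_pos.2 h
  have hss : Real.sqrt (Real.cos φ + E) * Real.sqrt (Real.cos φ + E) = Real.cos φ + E :=
    Real.mul_self_sqrt h.le
  have := (hasDerivAt_const E (1:ℝ)).div ((hasDerivAt_G0 h).const_mul 2)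
    (by positivity)
  refine this.congr_deriv ?_
  field_simp
  nlinarith [hss, hs]


lemma hasDerivAt_sqrt_u {E φ : ℝ} (h : 0 < Real.cos φ + E) :
    HasDerivAt (fun φ => Real.sqrt (Real.cos φ + E))
      (1 / (2 * Real.sqrt (Real.cos φ + E)) * (-Real.sin φ)) φ := by
  exact (Real.hasDerivAt_sqrt h.ne').comp φ ((Real.hasDerivAt_cos φ).add_const E)

lemma rot_W_deriv {E : ℝ} (hE : 1 < E) (φ : ℝ) :
    HasDerivAt (fun φ => -Real.sin φ / (2 * (1 - E^2) * Real.sqrt (Real.cos φ + E)))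
      (-(1 / (4 * ((Real.cos φ + E) * Real.sqrt (Real.cos φ + E))))
        - Real.sqrt (Real.cos φ + E) / (4 * (1 - E^2))) φ := by
  have h : 0 < Real.cos φ + E := rot_pos hE
  have hs : (0:ℝ) < Real.sqrt (Real.cos φ + E) := Real.sqrt_pos.2 h
  have hss : Real.sqrt (Real.cos φ + E) * Real.sqrt (Real.cos φ + E) = Real.cos φ + E :=
    Real.mul_self_sqrt h.le
  have hK : (1 : ℝ) - E^2 ≠ 0 := by nlinarith
  have hnum : HasDerivAt (fun φ => -Real.sin φ) (-Real.cos φ) φ := (Real.hasDerivAt_sin φ).neg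
  have hden : HasDerivAt (fun φ => 2 * (1 - E^2) * Real.sqrt (Real.cos φ + E))
      (2 * (1 - E^2) * (1 / (2 * Real.sqrt (Real.cos φ + E)) * (-Real.sin φ))) φ :=
    (hasDerivAt_sqrt_u h).const_mul _
  have hd := hnum.div hden (mul_ne_zero (mul_ne_zero two_ne_zero hK) hs.ne')
  refine hd.congr_deriv ?_
  have hsin : Real.sin φ ^ 2 = 1 - Real.cos φ ^ 2 := Real.sin_sq φ
  field_simp
  linear_combination (-8*Real.cos φ*(Real.cos φ + E) + 4*(1-E^2) + 4*(Real.cos φ + E)*(Real.sqrt (Real.cos φ + E)^2 + Real.cos φ + E)) * hss + (-4*(Real.cos φ + E)) * hsin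


lemma lib_D_pos {E θ : ℝ} (h2 : E < 1) : 0 < 2 - (1+E)*Real.sin θ^2 := by
  have hs := Real.sin_sq_le_one θ
  have hs0 := sq_nonneg (Real.sin θ)
  rcases le_or_gt 0 (1+E) with h|h
  · nlinarith
  · nlinarith

lemma hasDerivAt_H0 {E θ : ℝ} (hD : 0 < 2 - (1+E)*Real.sin θ^2) :
    HasDerivAt (fun E => (1+E)*Real.cos θ^2 / Real.sqrt (2 - (1+E)*Real.sin θ^2))
      (Real.cos θ^2 / Real.sqrt (2 - (1+E)*Real.sin θ^2)
        + (1+E)*Real.cos θ^2*Real.sin θ^2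
            / (2*((2 - (1+E)*Real.sin θ^2) * Real.sqrt (2 - (1+E)*Real.sin θ^2)))) E := by
  have hr : (0:ℝ) < Real.sqrt (2 - (1+E)*Real.sin θ^2) := Real.sqrt_pos.2 hD
  have hrr : Real.sqrt (2 - (1+E)*Real.sin θ^2) * Real.sqrt (2 - (1+E)*Real.sin θ^2)
      = 2 - (1+E)*Real.sin θ^2 := Real.mul_self_sqrt hD.le
  have hnum : HasDerivAt (fun E : ℝ => (1+E)*Real.cos θ^2) (Real.cos θ^2) E := by
    simpa using ((hasDerivAt_id E).const_add (1:ℝ)).mul_const (Real.cos θ^2)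
  have hDd : HasDerivAt (fun E : ℝ => 2 - (1+E)*Real.sin θ^2) (-Real.sin θ^2) E := by
    simpa using (((hasDerivAt_id E).const_add (1:ℝ)).mul_const (Real.sin θ^2)).const_sub 2
  have hden : HasDerivAt (fun E : ℝ => Real.sqrt (2 - (1+E)*Real.sin θ^2))
      (1 / (2*Real.sqrt (2 - (1+E)*Real.sin θ^2)) * (-Real.sin θ^2)) E :=
    (Real.hasDerivAt_sqrt hD.ne').comp E hDd
  have hdiv := hnum.div hden hr.ne'
  refine hdiv.congr_deriv ?_
  set r := Real.sqrt (2 - (1+E)*Real.sin θ^2) with hrdef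
  rw [← hrr]
  have hr0 : r ≠ 0 := hr.ne'
  field_simp
  ring

lemma hasDerivAt_H1 {E θ : ℝ} (hD : 0 < 2 - (1+E)*Real.sin θ^2) :
    HasDerivAt (fun E =>
      Real.cos θ^2 / Real.sqrt (2 - (1+E)*Real.sin θ^2)
        + (1+E)*Real.cos θ^2*Real.sin θ^2
            / (2*((2 - (1+E)*Real.sin θ^2) * Real.sqrt (2 - (1+E)*Real.sin θ^2))))
      (Real.cos θ^2*Real.sin θ^2
          / ((2 - (1+E)*Real.sin θ^2) * Real.sqrt (2 - (1+E)*Real.sin θ^2))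
        + (3/4)*((1+E)*Real.cos θ^2*Real.sin θ^4)
            / ((2 - (1+E)*Real.sin θ^2)^2 * Real.sqrt (2 - (1+E)*Real.sin θ^2))) E := by
  have hr : (0:ℝ) < Real.sqrt (2 - (1+E)*Real.sin θ^2) := Real.sqrt_pos.2 hD
  have hrr : Real.sqrt (2 - (1+E)*Real.sin θ^2) * Real.sqrt (2 - (1+E)*Real.sin θ^2)
      = 2 - (1+E)*Real.sin θ^2 := Real.mul_self_sqrt hD.le
  have hDd : HasDerivAt (fun E : ℝ => 2 - (1+E)*Real.sin θ^2) (-Real.sin θ^2) E := by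
    simpa using (((hasDerivAt_id E).const_add (1:ℝ)).mul_const (Real.sin θ^2)).const_sub 2
  have hsq : HasDerivAt (fun E : ℝ => Real.sqrt (2 - (1+E)*Real.sin θ^2))
      (1 / (2*Real.sqrt (2 - (1+E)*Real.sin θ^2)) * (-Real.sin θ^2)) E :=
    (Real.hasDerivAt_sqrt hD.ne').comp E hDd
  have hnum2 : HasDerivAt (fun E : ℝ => (1+E)*Real.cos θ^2*Real.sin θ^2)
      (Real.cos θ^2*Real.sin θ^2) E := by
    simpa [mul_assoc] using ((hasDerivAt_id E).const_add (1:ℝ)).mul_const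
      (Real.cos θ^2*Real.sin θ^2)
  have hden2 : HasDerivAt (fun E : ℝ =>
        2*((2 - (1+E)*Real.sin θ^2) * Real.sqrt (2 - (1+E)*Real.sin θ^2)))
      (2*((-Real.sin θ^2) * Real.sqrt (2 - (1+E)*Real.sin θ^2)
        + (2 - (1+E)*Real.sin θ^2) * (1 / (2*Real.sqrt (2 - (1+E)*Real.sin θ^2)) * (-Real.sin θ^2)))) E :=
    (hDd.mul hsq).const_mul 2
  have h1 := (hasDerivAt_const E (Real.cos θ^2)).div hsq hr.ne'
  have h2 := hnum2.div hden2 (by positivity)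
  have := h1.add h2
  refine this.congr_deriv ?_
  set r := Real.sqrt (2 - (1+E)*Real.sin θ^2) with hrdef
  rw [← hrr]
  have hr0 : r ≠ 0 := hr.ne'
  field_simp
  ring


lemma lib_W_deriv {E : ℝ} (h1 : -1 < E) (h2 : E < 1) (θ : ℝ) :
    HasDerivAt (fun θ => -(Real.sin θ * Real.cos θ^3)
        / (2*(1-E)*((2 - (1+E)*Real.sin θ^2) * Real.sqrt (2 - (1+E)*Real.sin θ^2))))
      ((Real.cos θ^2*Real.sin θ^2
          / ((2 - (1+E)*Real.sin θ^2) * Real.sqrt (2 - (1+E)*Real.sin θ^2))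
        + (3/4)*((1+E)*Real.cos θ^2*Real.sin θ^4)
            / ((2 - (1+E)*Real.sin θ^2)^2 * Real.sqrt (2 - (1+E)*Real.sin θ^2)))
       - ((1+E)*Real.cos θ^2 / Real.sqrt (2 - (1+E)*Real.sin θ^2)) / (4*(1-E^2))) θ := by
  have hD : 0 < 2 - (1+E)*Real.sin θ^2 := lib_D_pos h2
  have hr : (0:ℝ) < Real.sqrt (2 - (1+E)*Real.sin θ^2) := Real.sqrt_pos.2 hD
  have hrr : Real.sqrt (2 - (1+E)*Real.sin θ^2) * Real.sqrt (2 - (1+E)*Real.sin θ^2)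
      = 2 - (1+E)*Real.sin θ^2 := Real.mul_self_sqrt hD.le
  have hE1 : (0:ℝ) < 1 - E := by linarith
  have hN : HasDerivAt (fun θ => -(Real.sin θ * Real.cos θ^3))
      (-(Real.cos θ^4 - 3*Real.sin θ^2*Real.cos θ^2)) θ := by
    have h := ((Real.hasDerivAt_sin θ).mul ((Real.hasDerivAt_cos θ).pow 3)).neg
    refine h.congr_deriv ?_; push_cast [Pi.pow_apply]; ring
  have hDθ : HasDerivAt (fun θ : ℝ => 2 - (1+E)*Real.sin θ^2)
      (-((1+E)*(2*Real.sin θ*Real.cos θ))) θ := by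
    have h := (((Real.hasDerivAt_sin θ).pow 2).const_mul (1+E)).const_sub 2
    refine h.congr_deriv ?_; push_cast; ring
  have hsqrtθ : HasDerivAt (fun θ => Real.sqrt (2 - (1+E)*Real.sin θ^2))
      (1 / (2*Real.sqrt (2 - (1+E)*Real.sin θ^2)) * (-((1+E)*(2*Real.sin θ*Real.cos θ)))) θ :=
    (Real.hasDerivAt_sqrt hD.ne').comp θ hDθ
  have hQ : HasDerivAt (fun θ =>
      2*(1-E)*((2 - (1+E)*Real.sin θ^2) * Real.sqrt (2 - (1+E)*Real.sin θ^2)))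
      (2*(1-E)*((-((1+E)*(2*Real.sin θ*Real.cos θ))) * Real.sqrt (2 - (1+E)*Real.sin θ^2)
        + (2 - (1+E)*Real.sin θ^2)
          * (1 / (2*Real.sqrt (2 - (1+E)*Real.sin θ^2)) * (-((1+E)*(2*Real.sin θ*Real.cos θ)))))) θ :=
    (hDθ.mul hsqrtθ).const_mul _
  have hW := hN.div hQ (by positivity)
  refine hW.congr_deriv ?_
  have hsin : Real.sin θ^2 = 1 - Real.cos θ^2 := Real.sin_sq θ
  set r := Real.sqrt (2 - (1+E)*Real.sin θ^2) with hrdef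
  rw [← hrr]
  have hr0 : r ≠ 0 := hr.ne'
  have hK : (1:ℝ) - E^2 ≠ 0 := by nlinarith
  have hKm : (1:ℝ) + E ≠ 0 := by linarith
  have hKp : (1:ℝ) - E ≠ 0 := by linarith
  field_simp
  linear_combination ((2*(1-E)*(1+E)*Real.cos θ^2)*(r^2+(2 - (1+E)*Real.sin θ^2))+(4*(1-E^2)*(-Real.cos θ^2^2+3*Real.cos θ^2*Real.sin θ^2)-8*(1-E)*(1-E^2)*Real.cos θ^2*Real.sin θ^2)) * hrr +
    ((2*(1-E)*(1+E)*(2 - (1+E)*Real.sin θ^2)^2+(12*(1-E^2)*Real.sin θ^2-8*(1-E)*(1-E^2)*Real.sin θ^2)*(2 - (1+E)*Real.sin θ^2)-6*(1-E)*(1-E^2)*(1+E)*Real.sin θ^2^2)+(-4*(1-E^2)*(2 - (1+E)*Real.sin θ^2)-12*(1-E^2)*(1+E)*Real.sin θ^2)*(Real.cos θ^2+1-Real.sin θ^2)) * hsin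
lemma cont_sqrtD {E : ℝ} : Continuous fun θ => Real.sqrt (2 - (1+E)*Real.sin θ^2) :=
  Real.continuous_sqrt.comp (continuous_const.sub (continuous_const.mul
    ((Real.continuous_sin).pow 2)))

lemma cont_H0 {E : ℝ} (h2 : E < 1) :
    Continuous fun θ => (1+E)*Real.cos θ^2 / Real.sqrt (2 - (1+E)*Real.sin θ^2) :=
  Continuous.div (continuous_const.mul (Real.continuous_cos.pow 2)) cont_sqrtD
    (fun θ => (Real.sqrt_pos.2 (lib_D_pos h2)).ne')

lemma cont_H2 {E : ℝ} (h2 : E < 1) :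
    Continuous fun θ => Real.cos θ^2*Real.sin θ^2
          / ((2 - (1+E)*Real.sin θ^2) * Real.sqrt (2 - (1+E)*Real.sin θ^2))
        + (3/4)*((1+E)*Real.cos θ^2*Real.sin θ^4)
            / ((2 - (1+E)*Real.sin θ^2)^2 * Real.sqrt (2 - (1+E)*Real.sin θ^2)) := by
  have hD : ∀ θ : ℝ, 0 < 2 - (1+E)*Real.sin θ^2 := fun θ => lib_D_pos h2
  refine Continuous.add
    (Continuous.div ((Real.continuous_cos.pow 2).mul (Real.continuous_sin.pow 2))
      ((continuous_const.sub (continuous_const.mul (Real.continuous_sin.pow 2))).mul cont_sqrtD)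
      (fun θ => ?_))
    (Continuous.div (continuous_const.mul ((continuous_const.mul
        (Real.continuous_cos.pow 2)).mul (Real.continuous_sin.pow 4)))
      (((continuous_const.sub (continuous_const.mul (Real.continuous_sin.pow 2))).pow 2).mul
        cont_sqrtD)
      (fun θ => ?_))
  · have := hD θ; positivity
  · have := hD θ; positivity

lemma lib_identity {E : ℝ} (h1 : -1 < E) (h2 : E < 1) :
    (∫ θ in (-(π/2))..(π/2), (Real.cos θ^2*Real.sin θ^2
          / ((2 - (1+E)*Real.sin θ^2) * Real.sqrt (2 - (1+E)*Real.sin θ^2))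
        + (3/4)*((1+E)*Real.cos θ^2*Real.sin θ^4)
            / ((2 - (1+E)*Real.sin θ^2)^2 * Real.sqrt (2 - (1+E)*Real.sin θ^2))))
      = (∫ θ in (-(π/2))..(π/2), (1+E)*Real.cos θ^2 / Real.sqrt (2 - (1+E)*Real.sin θ^2))
          / (4*(1-E^2)) := by
  have hc0 := cont_H0 (E := E) h2
  have hc2 := cont_H2 (E := E) h2
  have hFTC := intervalIntegral.integral_eq_sub_of_hasDerivAt
    (f := fun θ => -(Real.sin θ * Real.cos θ^3)
        / (2*(1-E)*((2 - (1+E)*Real.sin θ^2) * Real.sqrt (2 - (1+E)*Real.sin θ^2))))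
    (f' := fun θ => (Real.cos θ^2*Real.sin θ^2
          / ((2 - (1+E)*Real.sin θ^2) * Real.sqrt (2 - (1+E)*Real.sin θ^2))
        + (3/4)*((1+E)*Real.cos θ^2*Real.sin θ^4)
            / ((2 - (1+E)*Real.sin θ^2)^2 * Real.sqrt (2 - (1+E)*Real.sin θ^2)))
       - ((1+E)*Real.cos θ^2 / Real.sqrt (2 - (1+E)*Real.sin θ^2)) / (4*(1-E^2)))
    (a := -(π/2)) (b := π/2)
    (fun θ _ => lib_W_deriv h1 h2 θ)
    ((hc2.sub (hc0.div_const _)).intervalIntegrable _ _)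
  have hval : (∫ θ in (-(π/2))..(π/2), ((Real.cos θ^2*Real.sin θ^2
          / ((2 - (1+E)*Real.sin θ^2) * Real.sqrt (2 - (1+E)*Real.sin θ^2))
        + (3/4)*((1+E)*Real.cos θ^2*Real.sin θ^4)
            / ((2 - (1+E)*Real.sin θ^2)^2 * Real.sqrt (2 - (1+E)*Real.sin θ^2)))
       - ((1+E)*Real.cos θ^2 / Real.sqrt (2 - (1+E)*Real.sin θ^2)) / (4*(1-E^2)))) = 0 := by
    rw [hFTC]; simp [Real.cos_pi_div_two]
  rw [intervalIntegral.integral_sub (hc2.intervalIntegrable _ _)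
    ((hc0.div_const _).intervalIntegrable _ _), intervalIntegral.integral_div] at hval
  linarith


lemma lib_sub {E : ℝ} (h1 : -1 < E) (h2 : E < 1) :
    (∫ φ in (-(Real.arccos (-E)))..(Real.arccos (-E)), Real.sqrt (Real.cos φ + E))
    = ∫ θ in (-(π/2))..(π/2),
        2 * ((1+E)*Real.cos θ^2 / Real.sqrt (2 - (1+E)*Real.sin θ^2)) := by
  set k := Real.sqrt ((1+E)/2) with hkdef
  have hk2 : k^2 = (1+E)/2 := Real.sq_sqrt (by linarith)
  have hk0 : 0 < k := Real.sqrt_pos.2 (by linarith)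
  have hk1 : k < 1 := by nlinarith
  have hbound : ∀ θ : ℝ, (k*Real.sin θ)^2 < 1 := by
    intro θ
    have hs := Real.sin_sq_le_one θ
    have hs0 := sq_nonneg (Real.sin θ)
    nlinarith [sq_nonneg k]
  have hrpos : ∀ θ : ℝ, 0 < Real.sqrt (1 - (k*Real.sin θ)^2) :=
    fun θ => Real.sqrt_pos.2 (by nlinarith [hbound θ])
  have hd : ∀ θ : ℝ, HasDerivAt (fun θ => 2 * Real.arcsin (k * Real.sin θ))
      (2 * (1 / Real.sqrt (1 - (k*Real.sin θ)^2) * (k * Real.cos θ))) θ := by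
    intro θ
    have hne1 : k * Real.sin θ ≠ 1 := fun h => by nlinarith [hbound θ]
    have hnem1 : k * Real.sin θ ≠ -1 := fun h => by nlinarith [hbound θ]
    exact ((Real.hasDerivAt_arcsin hnem1 hne1).comp θ
      ((Real.hasDerivAt_sin θ).const_mul k)).const_mul 2
  have hcont : Continuous fun θ => 2 * (1 / Real.sqrt (1 - (k*Real.sin θ)^2) * (k * Real.cos θ)) := by
    refine continuous_const.mul (Continuous.mul (Continuous.div continuous_const
      (Real.continuous_sqrt.comp (continuous_const.sub
        ((continuous_const.mul Real.continuous_sin).pow 2)))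
      (fun θ => (hrpos θ).ne')) (continuous_const.mul Real.continuous_cos))
  have harc : Real.arccos (-E) = 2 * Real.arcsin k := by
    have hcos : Real.cos (2 * Real.arcsin k) = -E := by
      rw [Real.cos_two_mul, Real.cos_arcsin, Real.sq_sqrt (by nlinarith : (0:ℝ) ≤ 1 - k^2)]
      linarith [hk2]
    rw [← hcos, Real.arccos_cos]
    · linarith [Real.arcsin_nonneg.2 hk0.le]
    · linarith [Real.arcsin_le_pi_div_two k, Real.pi_pos]
  have hsub := intervalIntegral.integral_comp_smul_deriv
    (f := fun θ => 2 * Real.arcsin (k * Real.sin θ))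
    (f' := fun θ => 2 * (1 / Real.sqrt (1 - (k*Real.sin θ)^2) * (k * Real.cos θ)))
    (g := fun φ => Real.sqrt (Real.cos φ + E))
    (a := -(π/2)) (b := π/2)
    (fun θ _ => hd θ) hcont.continuousOn
    (Real.continuous_sqrt.comp (Real.continuous_cos.add continuous_const))
  have e1 : 2 * Real.arcsin (k * Real.sin (π/2)) = Real.arccos (-E) := by
    rw [Real.sin_pi_div_two, mul_one, harc]
  have e2 : 2 * Real.arcsin (k * Real.sin (-(π/2))) = -(Real.arccos (-E)) := by
    rw [Real.sin_neg, Real.sin_pi_div_two, harc, mul_neg_one, Real.arcsin_neg]; ring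
  simp only at hsub
  rw [e1, e2] at hsub
  rw [← hsub]
  apply intervalIntegral.integral_congr
  intro θ hθ
  rw [uIcc_of_le (by linarith [Real.pi_pos])] at hθ
  have hcosθ : 0 ≤ Real.cos θ := Real.cos_nonneg_of_mem_Icc hθ
  simp only [smul_eq_mul, Function.comp]
  have hsc := Real.sin_sq_add_cos_sq θ
  have h2s : (Real.sqrt 2)^2 = 2 := Real.sq_sqrt (by norm_num)
  have hcos2 : Real.cos (2 * Real.arcsin (k * Real.sin θ)) = 1 - 2*(k*Real.sin θ)^2 := by
    rw [Real.cos_two_mul, Real.cos_arcsin, Real.sq_sqrt (by nlinarith [hbound θ])]; ring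
  have h5 : Real.cos (2 * Real.arcsin (k * Real.sin θ)) + E
      = (Real.sqrt 2 * k * Real.cos θ)^2 := by
    rw [hcos2]
    linear_combination (-2*Real.sin θ^2 - 2*Real.cos θ^2) * hk2
      + (-(Real.cos θ^2) * k^2) * h2s + (-(1+E)) * hsc
  rw [h5, Real.sqrt_sq (by positivity)]
  have hDsplit : 2-(1+E)*Real.sin θ^2 = 2*(1 - (k*Real.sin θ)^2) := by
    linear_combination (2*Real.sin θ^2) * hk2
  rw [hDsplit, Real.sqrt_mul (by norm_num : (0:ℝ) ≤ 2)]
  have h22 : Real.sqrt 2 * Real.sqrt 2 = 2 := Real.mul_self_sqrt (by norm_num)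
  have hr := hrpos θ
  have hs2pos : (0:ℝ) < Real.sqrt 2 := by positivity
  set q := Real.sqrt (1-(k*Real.sin θ)^2) with hq
  field_simp
  linear_combination (k^2*Real.cos θ^2) * h2s + (2*Real.cos θ^2) * hk2
lemma rot_identity {E : ℝ} (hE : 1 < E) :
    (∫ φ in (-π)..π, -(1/(4*((Real.cos φ + E)*Real.sqrt (Real.cos φ + E)))))
      = (∫ φ in (-π)..π, Real.sqrt (Real.cos φ + E)) / (4*(1-E^2)) := by
  have hc0 : Continuous fun φ => Real.sqrt (Real.cos φ + E) :=
    Real.continuous_sqrt.comp (Real.continuous_cos.add continuous_const)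
  have hc2 : Continuous fun φ => -(1/(4*((Real.cos φ + E)*Real.sqrt (Real.cos φ + E)))) := by
    refine Continuous.neg (Continuous.div continuous_const
      (continuous_const.mul ((Real.continuous_cos.add continuous_const).mul hc0))
      fun φ => ?_)
    have h := rot_pos (φ := φ) hE
    positivity
  have hFTC := intervalIntegral.integral_eq_sub_of_hasDerivAt
    (f := fun φ => -Real.sin φ / (2 * (1 - E^2) * Real.sqrt (Real.cos φ + E)))
    (f' := fun φ => -(1 / (4 * ((Real.cos φ + E) * Real.sqrt (Real.cos φ + E))))
        - Real.sqrt (Real.cos φ + E) / (4 * (1 - E^2)))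
    (a := -π) (b := π)
    (fun φ _ => rot_W_deriv hE φ)
    ((hc2.sub (hc0.div_const _)).intervalIntegrable _ _)
  have hval : (∫ φ in (-π)..π, (-(1 / (4 * ((Real.cos φ + E) * Real.sqrt (Real.cos φ + E))))
      - Real.sqrt (Real.cos φ + E) / (4 * (1 - E^2)))) = 0 := by
    rw [hFTC]; simp [Real.sin_pi]
  rw [intervalIntegral.integral_sub (hc2.intervalIntegrable _ _)
    ((hc0.div_const _).intervalIntegrable _ _), intervalIntegral.integral_div] at hval
  linarith

lemma rot_ball_gt {E₀ : ℝ} (hE : 1 < E₀) {E : ℝ}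
    (hE' : E ∈ closedBall E₀ ((E₀ - 1)/2)) : 1 < E := by
  rw [mem_closedBall, Real.dist_eq] at hE'
  have := abs_le.mp hE'
  linarith [this.1]

lemma rot_F1 {E₀ : ℝ} (hE : 1 < E₀) :
    HasDerivAt (fun E => ∫ φ in (-π)..π, Real.sqrt (Real.cos φ + E))
      (∫ φ in (-π)..π, 1 / (2 * Real.sqrt (Real.cos φ + E₀))) E₀ := by
  refine hasDerivAt_param_integral (a := -π) (b := π) (ε := (E₀-1)/2)
    (F := fun E φ => Real.sqrt (Real.cos φ + E))
    (F' := fun E φ => 1 / (2 * Real.sqrt (Real.cos φ + E)))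
    (by linarith [Real.pi_pos]) (by linarith)
    (fun E _ => (Real.continuous_sqrt.comp
      (Real.continuous_cos.add continuous_const)).continuousOn) ?_ ?_
  · refine ContinuousOn.div continuousOn_const
      (Continuous.continuousOn (continuous_const.mul (Real.continuous_sqrt.comp
        ((Real.continuous_cos.comp continuous_snd).add continuous_fst)))) ?_
    rintro ⟨E, φ⟩ ⟨hE', -⟩
    have h1 : 1 < E := rot_ball_gt hE hE'
    have := rot_pos (φ := φ) h1
    positivity
  · exact fun E hE' φ _ => hasDerivAt_G0 (rot_pos (rot_ball_gt hE hE'))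

lemma rot_F2 {E₀ : ℝ} (hE : 1 < E₀) :
    HasDerivAt (fun E => ∫ φ in (-π)..π, 1 / (2 * Real.sqrt (Real.cos φ + E)))
      (∫ φ in (-π)..π, -(1 / (4 * ((Real.cos φ + E₀) * Real.sqrt (Real.cos φ + E₀))))) E₀ := by
  refine hasDerivAt_param_integral (a := -π) (b := π) (ε := (E₀-1)/2)
    (F := fun E φ => 1 / (2 * Real.sqrt (Real.cos φ + E)))
    (F' := fun E φ => -(1 / (4 * ((Real.cos φ + E) * Real.sqrt (Real.cos φ + E)))))
    (by linarith [Real.pi_pos]) (by linarith)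
    (fun E hE' => ?_) ?_ ?_
  · refine ContinuousOn.div continuousOn_const (Continuous.continuousOn
      (continuous_const.mul (Real.continuous_sqrt.comp
        (Real.continuous_cos.add continuous_const)))) ?_
    intro φ _
    have h1 : 1 < E := rot_ball_gt hE hE'
    have := rot_pos (φ := φ) h1
    positivity
  · refine ContinuousOn.neg (ContinuousOn.div continuousOn_const
      (Continuous.continuousOn
        (continuous_const.mul
          ((((Real.continuous_cos.comp continuous_snd).add continuous_fst)).mul
            (Real.continuous_sqrt.comp
              ((Real.continuous_cos.comp continuous_snd).add continuous_fst))))) ?_)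
    rintro ⟨E, φ⟩ ⟨hE', -⟩
    have h1 : 1 < E := rot_ball_gt hE hE'
    have := rot_pos (φ := φ) h1
    positivity
  · exact fun E hE' φ _ => hasDerivAt_G1 (rot_pos (rot_ball_gt hE hE'))

lemma lib_ball_lt {E₀ : ℝ} (h2 : E₀ < 1) {E : ℝ}
    (hE' : E ∈ closedBall E₀ ((1 - E₀)/2)) : E < 1 := by
  rw [mem_closedBall, Real.dist_eq] at hE'
  have := abs_le.mp hE'
  linarith [this.2]

lemma jcontD : Continuous fun p : ℝ×ℝ => 2 - (1+p.1)*Real.sin p.2^2 :=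
  continuous_const.sub ((continuous_const.add continuous_fst).mul
    ((Real.continuous_sin.comp continuous_snd).pow 2))

lemma lib_F1 {E₀ : ℝ} (h2 : E₀ < 1) :
    HasDerivAt (fun E => ∫ θ in (-(π/2))..(π/2),
        (1+E)*Real.cos θ^2 / Real.sqrt (2 - (1+E)*Real.sin θ^2))
      (∫ θ in (-(π/2))..(π/2),
        (Real.cos θ^2 / Real.sqrt (2 - (1+E₀)*Real.sin θ^2)
          + (1+E₀)*Real.cos θ^2*Real.sin θ^2
              / (2*((2 - (1+E₀)*Real.sin θ^2) * Real.sqrt (2 - (1+E₀)*Real.sin θ^2))))) E₀ := by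
  refine hasDerivAt_param_integral (a := -(π/2)) (b := π/2) (ε := (1-E₀)/2)
    (F := fun E θ => (1+E)*Real.cos θ^2 / Real.sqrt (2 - (1+E)*Real.sin θ^2))
    (F' := fun E θ => Real.cos θ^2 / Real.sqrt (2 - (1+E)*Real.sin θ^2)
          + (1+E)*Real.cos θ^2*Real.sin θ^2
              / (2*((2 - (1+E)*Real.sin θ^2) * Real.sqrt (2 - (1+E)*Real.sin θ^2))))
    (by linarith [Real.pi_pos]) (by linarith)
    (fun E hE => (cont_H0 (lib_ball_lt h2 hE)).continuousOn) ?_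
    (fun E hE θ _ => hasDerivAt_H0 (lib_D_pos (lib_ball_lt h2 hE)))
  refine ContinuousOn.add
    (ContinuousOn.div
      (Continuous.continuousOn ((Real.continuous_cos.comp continuous_snd).pow 2))
      (Continuous.continuousOn (Real.continuous_sqrt.comp jcontD)) ?_)
    (ContinuousOn.div
      (Continuous.continuousOn (((continuous_const.add continuous_fst).mul
        ((Real.continuous_cos.comp continuous_snd).pow 2)).mul
        ((Real.continuous_sin.comp continuous_snd).pow 2)))
      (Continuous.continuousOn (continuous_const.mul
        (jcontD.mul (Real.continuous_sqrt.comp jcontD)))) ?_)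
  · rintro ⟨E, θ⟩ ⟨hE, -⟩
    have h := lib_D_pos (θ := θ) (lib_ball_lt h2 hE)
    positivity
  · rintro ⟨E, θ⟩ ⟨hE, -⟩
    have h := lib_D_pos (θ := θ) (lib_ball_lt h2 hE)
    positivity

lemma lib_F2 {E₀ : ℝ} (h2 : E₀ < 1) :
    HasDerivAt (fun E => ∫ θ in (-(π/2))..(π/2),
        (Real.cos θ^2 / Real.sqrt (2 - (1+E)*Real.sin θ^2)
          + (1+E)*Real.cos θ^2*Real.sin θ^2
              / (2*((2 - (1+E)*Real.sin θ^2) * Real.sqrt (2 - (1+E)*Real.sin θ^2)))))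
      (∫ θ in (-(π/2))..(π/2),
        (Real.cos θ^2*Real.sin θ^2
            / ((2 - (1+E₀)*Real.sin θ^2) * Real.sqrt (2 - (1+E₀)*Real.sin θ^2))
          + (3/4)*((1+E₀)*Real.cos θ^2*Real.sin θ^4)
              / ((2 - (1+E₀)*Real.sin θ^2)^2 * Real.sqrt (2 - (1+E₀)*Real.sin θ^2)))) E₀ := by
  refine hasDerivAt_param_integral (a := -(π/2)) (b := π/2) (ε := (1-E₀)/2)
    (F := fun E θ => Real.cos θ^2 / Real.sqrt (2 - (1+E)*Real.sin θ^2)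
          + (1+E)*Real.cos θ^2*Real.sin θ^2
              / (2*((2 - (1+E)*Real.sin θ^2) * Real.sqrt (2 - (1+E)*Real.sin θ^2))))
    (F' := fun E θ => Real.cos θ^2*Real.sin θ^2
            / ((2 - (1+E)*Real.sin θ^2) * Real.sqrt (2 - (1+E)*Real.sin θ^2))
          + (3/4)*((1+E)*Real.cos θ^2*Real.sin θ^4)
              / ((2 - (1+E)*Real.sin θ^2)^2 * Real.sqrt (2 - (1+E)*Real.sin θ^2)))
    (by linarith [Real.pi_pos]) (by linarith)
    (fun E hE => ?_) ?_
    (fun E hE θ _ => hasDerivAt_H1 (lib_D_pos (lib_ball_lt h2 hE)))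
  · have hD : ∀ θ : ℝ, 0 < 2 - (1+E)*Real.sin θ^2 := fun θ => lib_D_pos (lib_ball_lt h2 hE)
    refine Continuous.continuousOn (Continuous.add
      (Continuous.div (Real.continuous_cos.pow 2) cont_sqrtD
        (fun θ => (Real.sqrt_pos.2 (hD θ)).ne'))
      (Continuous.div ((continuous_const.mul (Real.continuous_cos.pow 2)).mul
          (Real.continuous_sin.pow 2))
        (continuous_const.mul ((continuous_const.sub (continuous_const.mul
          (Real.continuous_sin.pow 2))).mul cont_sqrtD))
        (fun θ => ?_)))
    have h := hD θ
    positivity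
  · refine ContinuousOn.add
      (ContinuousOn.div
        (Continuous.continuousOn (((Real.continuous_cos.comp continuous_snd).pow 2).mul
          ((Real.continuous_sin.comp continuous_snd).pow 2)))
        (Continuous.continuousOn (jcontD.mul (Real.continuous_sqrt.comp jcontD))) ?_)
      (ContinuousOn.div
        (Continuous.continuousOn (continuous_const.mul (((continuous_const.add
          continuous_fst).mul ((Real.continuous_cos.comp continuous_snd).pow 2)).mul
          ((Real.continuous_sin.comp continuous_snd).pow 4))))
        (Continuous.continuousOn ((jcontD.pow 2).mul (Real.continuous_sqrt.comp jcontD))) ?_)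
    · rintro ⟨E, θ⟩ ⟨hE, -⟩
      have h := lib_D_pos (θ := θ) (lib_ball_lt h2 hE)
      positivity
    · rintro ⟨E, θ⟩ ⟨hE, -⟩
      have h := lib_D_pos (θ := θ) (lib_ball_lt h2 hE)
      positivity

/-- **A common second-order ODE.** Both `J_rot` (on `ℰ > 1`) and `J_lib` (on `−1 < ℰ < 1`)
satisfy the linear differential equation `J''(ℰ) = J(ℰ)/(4(1−ℰ²))`. -/
theorem J_rot_J_lib_second_order_ODE :
    (∀ E : ℝ, 1 < E → deriv (deriv J_rot) E = J_rot E / (4 * (1 - E ^ 2))) ∧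
    (∀ E : ℝ, -1 < E → E < 1 → deriv (deriv J_lib) E = J_lib E / (4 * (1 - E ^ 2))) := by
  constructor
  · intro E₀ hE₀
    have hd1 : ∀ E ∈ Ioi (1:ℝ), HasDerivAt J_rot
        ((1/(Real.sqrt 2 * π)) * ∫ φ in (-π)..π, 1/(2*Real.sqrt (Real.cos φ + E))) E :=
      fun E hE => (rot_F1 hE).const_mul _
    have hev : deriv J_rot =ᶠ[nhds E₀]
        fun E => (1/(Real.sqrt 2 * π)) * ∫ φ in (-π)..π, 1/(2*Real.sqrt (Real.cos φ + E)) :=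
      Filter.eventually_of_mem (isOpen_Ioi.mem_nhds hE₀) (fun E hE => (hd1 E hE).deriv)
    rw [hev.deriv_eq, ((rot_F2 hE₀).const_mul ((1:ℝ)/(Real.sqrt 2 * π))).deriv,
      rot_identity hE₀]
    unfold J_rot
    ring
  · intro E₀ h1 h2
    have hmem : E₀ ∈ Ioo (-1:ℝ) 1 := ⟨h1, h2⟩
    have hJeq : ∀ E ∈ Ioo (-1:ℝ) 1, J_lib E = (2*Real.sqrt 2/π) *
        ∫ θ in (-(π/2))..(π/2), (1+E)*Real.cos θ^2 / Real.sqrt (2 - (1+E)*Real.sin θ^2) := by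
      intro E hE
      unfold J_lib
      rw [lib_sub hE.1 hE.2, intervalIntegral.integral_const_mul]
      ring
    have hev0 : J_lib =ᶠ[nhds E₀] fun E => (2*Real.sqrt 2/π) *
        ∫ θ in (-(π/2))..(π/2), (1+E)*Real.cos θ^2 / Real.sqrt (2 - (1+E)*Real.sin θ^2) :=
      Filter.eventually_of_mem (isOpen_Ioo.mem_nhds hmem) hJeq
    rw [hev0.deriv.deriv_eq]
    have hd1 : ∀ E ∈ Ioo (-1:ℝ) 1, HasDerivAt (fun E => (2*Real.sqrt 2/π) *
        ∫ θ in (-(π/2))..(π/2), (1+E)*Real.cos θ^2 / Real.sqrt (2 - (1+E)*Real.sin θ^2))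
        ((2*Real.sqrt 2/π) * ∫ θ in (-(π/2))..(π/2),
          (Real.cos θ^2 / Real.sqrt (2 - (1+E)*Real.sin θ^2)
            + (1+E)*Real.cos θ^2*Real.sin θ^2
                / (2*((2 - (1+E)*Real.sin θ^2) * Real.sqrt (2 - (1+E)*Real.sin θ^2))))) E :=
      fun E hE => (lib_F1 hE.2).const_mul _
    have hev : (deriv fun E => (2*Real.sqrt 2/π) *
        ∫ θ in (-(π/2))..(π/2), (1+E)*Real.cos θ^2 / Real.sqrt (2 - (1+E)*Real.sin θ^2))
        =ᶠ[nhds E₀] fun E => (2*Real.sqrt 2/π) * ∫ θ in (-(π/2))..(π/2),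
          (Real.cos θ^2 / Real.sqrt (2 - (1+E)*Real.sin θ^2)
            + (1+E)*Real.cos θ^2*Real.sin θ^2
                / (2*((2 - (1+E)*Real.sin θ^2) * Real.sqrt (2 - (1+E)*Real.sin θ^2)))) :=
      Filter.eventually_of_mem (isOpen_Ioo.mem_nhds hmem) (fun E hE => (hd1 E hE).deriv)
    rw [hev.deriv_eq, ((lib_F2 h2).const_mul ((2:ℝ)*Real.sqrt 2/π)).deriv,
      lib_identity h1 h2, hJeq E₀ hmem]
    ring
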